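/- For any word w over {a,b}, H_w equals the number of nonempty prefixes of w that are closed (i.e., the number of integers n with 1 ≤ n ≤ |w| such that the prefix of w of length n is closed). Moreover, if w is trapezoidal, then L_w equals the number of nonempty prefixes of w that are open. -/

import Mathlib

/-- The two-letter alphabet {a, b}. -/
inductive AB : Type
  | a : AB
  | b : AB
deriving DecidableEq, Repr

/-- A (finite) word over {a, b}. -/
abbrev Word := List AB

open AB

/-- `u` occurs in `w` at position `i`. -/
def OccursAt (u w : Word) (i : ℕ) : Prop :=
  i + u.length ≤ w.length ∧ (w.drop i).take u.length = u

/-- `u` occurs exactly once in `w` (is unrepeated in `w`). -/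
def OccursOnce (u w : Word) : Prop := ∃! i, OccursAt u w i

/-- `u` is a right special factor of `w`: both `ua` and `ub` are factors of `w`. -/
def IsRightSpecial (u w : Word) : Prop := (u ++ [a]) <:+: w ∧ (u ++ [b]) <:+: w

/-- `u` is a left special factor of `w`: both `au` and `bu` are factors of `w`. -/
def IsLeftSpecial (u w : Word) : Prop := ([a] ++ u) <:+: w ∧ ([b] ++ u) <:+: w

/-- `K w`: the length of the shortest unrepeated suffix of `w`. -/
noncomputable def Kp (w : Word) : ℕ := sInf {n | ∃ s : Word, s <:+ w ∧ s.length = n ∧ OccursOnce s w}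

/-- `H w`: the length of the shortest unrepeated prefix of `w`. -/
noncomputable def Hp (w : Word) : ℕ := sInf {n | ∃ p : Word, p <+: w ∧ p.length = n ∧ OccursOnce p w}

/-- `R w`: the smallest `n ≥ 0` such that `w` has no right special factor of length `n`. -/
noncomputable def Rp (w : Word) : ℕ := sInf {n | ∀ u : Word, u.length = n → ¬ IsRightSpecial u w}

/-- `L w`: the smallest `n ≥ 0` such that `w` has no left special factor of length `n`. -/
noncomputable def Lp (w : Word) : ℕ := sInf {n | ∀ u : Word, u.length = n → ¬ IsLeftSpecial u w}

/-- A word `w` is trapezoidal if `|w| = K w + R w`. -/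
def IsTrapezoidal (w : Word) : Prop := w.length = Kp w + Rp w

/-- A finite word over `{a,b}` is Sturmian iff it is balanced: there is no word `u`
with both `aua` and `bub` factors of `w`. -/
def IsSturmian (w : Word) : Prop :=
  ¬ ∃ u : Word, ([a] ++ u ++ [a]) <:+: w ∧ ([b] ++ u ++ [b]) <:+: w

/-- A nonempty word is closed if it has a border (a proper prefix which is also a suffix)
whose only occurrences in `w` are as a prefix and as a suffix. -/
def IsClosedWord (w : Word) : Prop :=
  w ≠ [] ∧ ∃ v : Word, v <+: w ∧ v.length < w.length ∧ v <:+ w ∧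
    ∀ i : ℕ, OccursAt v w i → i = 0 ∨ i + v.length = w.length

/-- A nonempty word is open if it is not closed. -/
def IsOpenWord (w : Word) : Prop := w ≠ [] ∧ ¬ IsClosedWord w

/-- Central words: `a^n`, `b^n`, or `u a b v = v b a u`. -/
def IsCentral (w : Word) : Prop :=
  (∃ n : ℕ, w = List.replicate n a) ∨ (∃ n : ℕ, w = List.replicate n b) ∨
  (∃ u v : Word, w = u ++ [a, b] ++ v ∧ w = v ++ [b, a] ++ u)

/-- The minimal period of `w`: `|w|` minus the length of the longest border of `w`. -/
noncomputable def minPeriod (w : Word) : ℕ :=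
  w.length - sSup {n | ∃ v : Word, v.length = n ∧ v <+: w ∧ v ≠ w ∧ v <:+ w}
open AB Finset

/-! ### Basic occurrence lemmas -/

lemma occursAt_iff {u w : Word} {i : ℕ} :
    OccursAt u w i ↔ ∃ s t : Word, s.length = i ∧ w = s ++ u ++ t := by
  constructor
  · rintro ⟨hle, heq⟩
    refine ⟨w.take i, w.drop (i + u.length), ?_, ?_⟩
    · simp only [List.length_take]; omega
    · conv_lhs => rw [← List.take_append_drop i w]
      rw [List.append_assoc]
      congr 1
      conv_lhs => rw [← List.take_append_drop u.length (w.drop i)]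
      rw [heq, List.drop_drop]
      try ring_nf
  · rintro ⟨s, t, hlen, rfl⟩
    subst hlen
    refine ⟨by simp, ?_⟩
    rw [List.append_assoc, List.drop_left, List.take_left]

lemma OccursAt.length_le {u w : Word} {i : ℕ} (h : OccursAt u w i) :
    i + u.length ≤ w.length := h.1

lemma infix_iff_exists_occursAt {u w : Word} : u <:+: w ↔ ∃ i, OccursAt u w i := by
  constructor
  · rintro ⟨s, t, rfl⟩
    exact ⟨s.length, occursAt_iff.mpr ⟨s, t, rfl, rfl⟩⟩
  · rintro ⟨i, h⟩
    rcases occursAt_iff.mp h with ⟨s, t, -, rfl⟩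
    exact ⟨s, t, rfl⟩

lemma occursAt_zero_iff_prefix {u w : Word} : OccursAt u w 0 ↔ u <+: w := by
  rw [occursAt_iff]
  constructor
  · rintro ⟨s, t, hs, rfl⟩
    rw [List.length_eq_zero_iff] at hs
    subst hs; exact ⟨t, by simp⟩
  · rintro ⟨t, rfl⟩; exact ⟨[], t, rfl, rfl⟩

lemma suffix_occursAt {u w : Word} (h : u <:+ w) : OccursAt u w (w.length - u.length) := by
  rcases h with ⟨s, rfl⟩
  refine occursAt_iff.mpr ⟨s, [], ?_, by simp⟩
  simp

lemma OccursAt.suffix_of_end {u w : Word} {i : ℕ} (h : OccursAt u w i)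
    (hend : i + u.length = w.length) : u <:+ w := by
  rcases occursAt_iff.mp h with ⟨s, t, hs, rfl⟩
  have hl : (s ++ u ++ t).length = s.length + u.length + t.length := by simp; omega
  have ht : t.length = 0 := by omega
  rw [List.length_eq_zero_iff] at ht; subst ht
  exact ⟨s, by simp⟩

lemma OccursAt.mono_prefix {u' u w : Word} {i : ℕ} (hp : u' <+: u) (h : OccursAt u w i) :
    OccursAt u' w i := by
  rcases occursAt_iff.mp h with ⟨s, t, hs, rfl⟩
  rcases hp with ⟨r, rfl⟩
  exact occursAt_iff.mpr ⟨s, r ++ t, hs, by simp⟩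

lemma OccursAt.mono_suffix {u' u w : Word} {i : ℕ} (hp : u' <:+ u) (h : OccursAt u w i) :
    OccursAt u' w (i + (u.length - u'.length)) := by
  rcases occursAt_iff.mp h with ⟨s, t, hs, rfl⟩
  rcases hp with ⟨r, rfl⟩
  refine occursAt_iff.mpr ⟨s ++ r, t, ?_, by simp⟩
  simp [hs]

lemma OccursAt.extend_right {u w : Word} {i : ℕ} (h : OccursAt u w i)
    (hlt : i + u.length < w.length) : ∃ c : AB, OccursAt (u ++ [c]) w i := by
  rcases occursAt_iff.mp h with ⟨s, t, hs, rfl⟩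
  have ht : t ≠ [] := by
    rintro rfl; simp at hlt; omega
  rcases List.exists_cons_of_ne_nil ht with ⟨c, t', rfl⟩
  exact ⟨c, occursAt_iff.mpr ⟨s, t', hs, by simp⟩⟩

lemma OccursAt.extend_left {u w : Word} {i : ℕ} (h : OccursAt u w (i + 1)) :
    ∃ c : AB, OccursAt ([c] ++ u) w i := by
  rcases occursAt_iff.mp h with ⟨s, t, hs, rfl⟩
  have hs' : s ≠ [] := by rintro rfl; simp at hs
  refine ⟨s.getLast hs', occursAt_iff.mpr ⟨s.dropLast, t, ?_, ?_⟩⟩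
  · rw [List.length_dropLast, hs]; omega
  · conv_lhs => rw [← List.dropLast_append_getLast hs']
    simp

lemma occursOnce_self (w : Word) : OccursOnce w w := by
  refine ⟨0, occursAt_zero_iff_prefix.mpr (List.prefix_refl w), ?_⟩
  intro i hi
  have := hi.length_le
  omega
/-! ### Characterizations of Hp, Kp, Rp, Lp -/

lemma occursOnce_take_mono {w : Word} {m n : ℕ} (hmn : m ≤ n) (hn : n ≤ w.length)
    (h : OccursOnce (w.take m) w) : OccursOnce (w.take n) w := by
  refine ⟨0, occursAt_zero_iff_prefix.mpr (List.take_prefix n w), ?_⟩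
  intro i hi
  have hpre : w.take m <+: w.take n := List.take_isPrefix_take.mpr (Or.inl hmn)
  rcases h with ⟨j, hj, huniq⟩
  have h0 : OccursAt (w.take m) w 0 := occursAt_zero_iff_prefix.mpr (List.take_prefix m w)
  have hji := huniq _ (hi.mono_prefix hpre)
  have hj0 := huniq _ h0
  omega

lemma mem_H_set_iff {w : Word} {n : ℕ} :
    (n ∈ {n | ∃ p : Word, p <+: w ∧ p.length = n ∧ OccursOnce p w}) ↔
      n ≤ w.length ∧ OccursOnce (w.take n) w := by
  constructor
  · rintro ⟨p, hp, rfl, honce⟩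
    have := hp.length_le
    refine ⟨this, ?_⟩
    rwa [List.prefix_iff_eq_take.mp hp] at honce
  · rintro ⟨hn, honce⟩
    exact ⟨w.take n, List.take_prefix n w, by simp [hn], honce⟩

lemma Hp_le_length (w : Word) : Hp w ≤ w.length := by
  apply Nat.sInf_le
  exact ⟨w, List.prefix_refl w, rfl, occursOnce_self w⟩

lemma Hp_le_iff {w : Word} {n : ℕ} (hn : n ≤ w.length) :
    Hp w ≤ n ↔ OccursOnce (w.take n) w := by
  constructor
  · intro h
    have hne : {n | ∃ p : Word, p <+: w ∧ p.length = n ∧ OccursOnce p w}.Nonempty :=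
      ⟨w.length, w, List.prefix_refl w, rfl, occursOnce_self w⟩
    have hmem := Nat.sInf_mem hne
    rcases mem_H_set_iff.mp hmem with ⟨-, honce⟩
    exact occursOnce_take_mono h hn honce
  · intro h
    exact Nat.sInf_le (mem_H_set_iff.mpr ⟨hn, h⟩)

lemma length_drop_sub {w : Word} {n : ℕ} (hn : n ≤ w.length) :
    (w.drop (w.length - n)).length = n := by simp; omega

lemma occursOnce_suffix_mono {w : Word} {m n : ℕ} (hmn : m ≤ n) (hn : n ≤ w.length)
    (h : OccursOnce (w.drop (w.length - m)) w) : OccursOnce (w.drop (w.length - n)) w := by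
  have hm : m ≤ w.length := le_trans hmn hn
  have hlm := length_drop_sub (w := w) hm
  have hln := length_drop_sub (w := w) hn
  have hsufn : OccursAt (w.drop (w.length - n)) w (w.length - n) := by
    have := suffix_occursAt (w.drop_suffix (w.length - n))
    rwa [hln] at this
  refine ⟨w.length - n, hsufn, ?_⟩
  intro j hj
  have hsm : w.drop (w.length - m) <:+ w.drop (w.length - n) := by
    have : (w.drop (w.length - n)).drop (n - m) = w.drop (w.length - m) := by
      rw [List.drop_drop]; congr 1; omega
    rw [← this]; exact List.drop_suffix _ _
  have hjlen := hj.length_le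
  rw [hln] at hjlen
  have hocc := hj.mono_suffix hsm
  rw [hln, hlm] at hocc
  rcases h with ⟨j0, hj0, huniq⟩
  have h1 := huniq _ hocc
  have h2 := huniq _ (by
    have := suffix_occursAt (w.drop_suffix (w.length - m))
    rwa [hlm] at this)
  omega

lemma Kp_le_length (w : Word) : Kp w ≤ w.length := by
  apply Nat.sInf_le
  exact ⟨w, List.suffix_refl w, rfl, occursOnce_self w⟩

lemma mem_K_set_iff {w : Word} {n : ℕ} :
    (n ∈ {n | ∃ s : Word, s <:+ w ∧ s.length = n ∧ OccursOnce s w}) ↔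
      n ≤ w.length ∧ OccursOnce (w.drop (w.length - n)) w := by
  constructor
  · rintro ⟨s, hs, rfl, honce⟩
    have := hs.length_le
    refine ⟨this, ?_⟩
    rwa [List.suffix_iff_eq_drop.mp hs] at honce
  · rintro ⟨hn, honce⟩
    exact ⟨w.drop (w.length - n), w.drop_suffix _, length_drop_sub hn, honce⟩

lemma Kp_le_iff {w : Word} {n : ℕ} (hn : n ≤ w.length) :
    Kp w ≤ n ↔ OccursOnce (w.drop (w.length - n)) w := by
  constructor
  · intro h
    have hne : {n | ∃ s : Word, s <:+ w ∧ s.length = n ∧ OccursOnce s w}.Nonempty :=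
      ⟨w.length, w, List.suffix_refl w, rfl, occursOnce_self w⟩
    have hmem := Nat.sInf_mem hne
    rcases mem_K_set_iff.mp hmem with ⟨-, honce⟩
    exact occursOnce_suffix_mono h hn honce
  · intro h
    exact Nat.sInf_le (mem_K_set_iff.mpr ⟨hn, h⟩)
/-! ### Rp and Lp -/

lemma IsRightSpecial.drop_one {u w : Word} (h : IsRightSpecial u w) :
    IsRightSpecial (u.drop 1) w := by
  rcases List.drop_suffix 1 u with ⟨r, hr⟩
  constructor
  · refine List.IsInfix.trans ⟨r, [], ?_⟩ h.1
    rw [List.append_nil, ← List.append_assoc, hr]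
  · refine List.IsInfix.trans ⟨r, [], ?_⟩ h.2
    rw [List.append_nil, ← List.append_assoc, hr]

lemma IsLeftSpecial.take {u w : Word} (h : IsLeftSpecial u w) (n : ℕ) :
    IsLeftSpecial (u.take n) w := by
  rcases List.take_prefix n u with ⟨r, hr⟩
  constructor
  · refine List.IsInfix.trans ⟨[], r, ?_⟩ h.1
    simp [← List.append_assoc, hr]
  · refine List.IsInfix.trans ⟨[], r, ?_⟩ h.2
    simp [← List.append_assoc, hr]

lemma mem_R_set_succ {w : Word} {n : ℕ}
    (h : ∀ u : Word, u.length = n → ¬ IsRightSpecial u w) :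
    ∀ u : Word, u.length = n + 1 → ¬ IsRightSpecial u w := by
  intro u hu hrs
  exact h (u.drop 1) (by simp [hu]) hrs.drop_one

lemma mem_L_set_succ {w : Word} {n : ℕ}
    (h : ∀ u : Word, u.length = n → ¬ IsLeftSpecial u w) :
    ∀ u : Word, u.length = n + 1 → ¬ IsLeftSpecial u w := by
  intro u hu hls
  exact h (u.take n) (by simp [hu]) (hls.take n)

lemma length_mem_R_set (w : Word) :
    ∀ u : Word, u.length = w.length → ¬ IsRightSpecial u w := by
  intro u hu h
  have := h.1.length_le
  simp [hu] at this

lemma length_mem_L_set (w : Word) :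
    ∀ u : Word, u.length = w.length → ¬ IsLeftSpecial u w := by
  intro u hu h
  have := h.1.length_le
  simp [hu] at this

lemma Rp_le_length (w : Word) : Rp w ≤ w.length := Nat.sInf_le (length_mem_R_set w)

lemma Lp_le_length (w : Word) : Lp w ≤ w.length := Nat.sInf_le (length_mem_L_set w)

lemma Rp_le_iff {w : Word} {n : ℕ} :
    Rp w ≤ n ↔ ∀ u : Word, u.length = n → ¬ IsRightSpecial u w := by
  constructor
  · intro h
    have hne : {n | ∀ u : Word, u.length = n → ¬ IsRightSpecial u w}.Nonempty :=
      ⟨w.length, length_mem_R_set w⟩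
    have hmem := Nat.sInf_mem hne
    have : ∀ m, Rp w + m ∈ {n | ∀ u : Word, u.length = n → ¬ IsRightSpecial u w} := by
      intro m
      induction m with
      | zero => exact hmem
      | succ k ih => exact mem_R_set_succ ih
    have h2 := this (n - Rp w)
    rwa [show Rp w + (n - Rp w) = n by omega] at h2
  · intro h
    exact Nat.sInf_le h

lemma Lp_le_iff {w : Word} {n : ℕ} :
    Lp w ≤ n ↔ ∀ u : Word, u.length = n → ¬ IsLeftSpecial u w := by
  constructor
  · intro h
    have hne : {n | ∀ u : Word, u.length = n → ¬ IsLeftSpecial u w}.Nonempty :=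
      ⟨w.length, length_mem_L_set w⟩
    have hmem := Nat.sInf_mem hne
    have : ∀ m, Lp w + m ∈ {n | ∀ u : Word, u.length = n → ¬ IsLeftSpecial u w} := by
      intro m
      induction m with
      | zero => exact hmem
      | succ k ih => exact mem_L_set_succ ih
    have h2 := this (n - Lp w)
    rwa [show Lp w + (n - Lp w) = n by omega] at h2
  · intro h
    exact Nat.sInf_le h

lemma exists_RS_iff_lt_Rp {w : Word} {n : ℕ} :
    (∃ u : Word, u.length = n ∧ IsRightSpecial u w) ↔ n < Rp w := by
  rw [← not_le, Rp_le_iff]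
  push_neg
  tauto

lemma exists_LS_iff_lt_Lp {w : Word} {n : ℕ} :
    (∃ u : Word, u.length = n ∧ IsLeftSpecial u w) ↔ n < Lp w := by
  rw [← not_le, Lp_le_iff]
  push_neg
  tauto
/-! ### Part 1 : Hp counts closed prefixes -/

lemma OccursAt.of_append {u v z : Word} {i : ℕ} (h : OccursAt u (v ++ z) i)
    (hle : i + u.length ≤ v.length) : OccursAt u v i := by
  rcases occursAt_iff.mp h with ⟨s, t, hs, heq⟩
  have hlen : s.length + u.length + t.length = v.length + z.length := by
    have := congrArg List.length heq
    simp at this; omega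
  refine occursAt_iff.mpr ⟨s, t.take (t.length - z.length), hs, ?_⟩
  have h2 : (s ++ u ++ t.take (t.length - z.length)) ++ (t.drop (t.length - z.length)) = v ++ z := by
    rw [List.append_assoc, List.take_append_drop, heq]
  have hlen2 : (s ++ u ++ t.take (t.length - z.length)).length = v.length := by
    simp; omega
  exact (List.append_inj h2 hlen2).1.symm

lemma OccursAt.append_right {u v z : Word} {i : ℕ} (h : OccursAt u v i) :
    OccursAt u (v ++ z) i := by
  rcases occursAt_iff.mp h with ⟨s, t, hs, rfl⟩
  exact occursAt_iff.mpr ⟨s, t ++ z, hs, by simp⟩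

lemma occursAt_nil_iff {w : Word} {i : ℕ} : OccursAt ([] : Word) w i ↔ i ≤ w.length := by
  constructor
  · intro h; have := h.length_le; omega
  · intro h; exact ⟨by simpa using h, by simp⟩

lemma one_le_Hp {w : Word} (hw : w ≠ []) : 1 ≤ Hp w := by
  have hlen : 1 ≤ w.length := List.length_pos_iff.mpr hw
  by_contra h
  push_neg at h
  have h0 : Hp w ≤ 0 := by omega
  rcases (Hp_le_iff (n := 0) (by omega)).mp h0 with ⟨j, hj, huniq⟩
  have h0' := huniq 0 (by simp [occursAt_nil_iff])
  have h1 := huniq 1 (by simp [occursAt_nil_iff]; omega)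
  omega

/-- In `w = v ++ [x]`, any occurrence of a prefix of `v` either lies inside `v`
or ends at the end of `w`. -/
lemma occ_cases {v : Word} {x : AB} {u : Word} {i : ℕ}
    (h : OccursAt u (v ++ [x]) i) :
    (OccursAt u v i) ∨ (i + u.length = v.length + 1) := by
  have hle := h.length_le
  simp at hle
  by_cases hc : i + u.length ≤ v.length
  · exact Or.inl (h.of_append hc)
  · right; omega

lemma take_append_singleton {v : Word} {x : AB} {n : ℕ} (hn : n ≤ v.length) :
    (v ++ [x]).take n = v.take n := by
  rw [List.take_append_of_le_length hn]

lemma Hp_mono_snoc (v : Word) (x : AB) : Hp v ≤ Hp (v ++ [x]) := by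
  rcases Nat.eq_zero_or_pos (Hp v) with h0 | hpos
  · omega
  set n := Hp v - 1 with hn
  have hnv : n < Hp v := by omega
  have hnle : n ≤ v.length := by have := Hp_le_length v; omega
  have hnotonce : ¬ OccursOnce (v.take n) v := by
    intro h
    have := (Hp_le_iff hnle).mpr h
    omega
  -- some occurrence i ≠ 0 of v.take n in v
  have h0 : OccursAt (v.take n) v 0 := occursAt_zero_iff_prefix.mpr (List.take_prefix n v)
  have : ∃ i, i ≠ 0 ∧ OccursAt (v.take n) v i := by
    by_contra hcon
    push_neg at hcon
    exact hnotonce ⟨0, h0, fun j hj => by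
      by_contra hj0
      exact hcon j hj0 hj⟩
  rcases this with ⟨i, hi0, hi⟩
  -- then v.take n is repeated in w as well
  have hnw : n ≤ (v ++ [x]).length := by simp; omega
  have htake : (v ++ [x]).take n = v.take n := take_append_singleton hnle
  have hnotoncew : ¬ OccursOnce ((v ++ [x]).take n) (v ++ [x]) := by
    rw [htake]
    rintro ⟨j, hj, huniq⟩
    have h1 := huniq _ (h0.append_right (z := [x]))
    have h2 := huniq _ (hi.append_right (z := [x]))
    omega
  by_contra hcon
  push_neg at hcon
  have : Hp (v ++ [x]) ≤ n := by omega
  exact hnotoncew ((Hp_le_iff hnw).mp this)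

lemma Hp_snoc_le (v : Word) (x : AB) : Hp (v ++ [x]) ≤ Hp v + 1 := by
  set m := Hp v with hm
  have hmv : m ≤ v.length := Hp_le_length v
  have honce : OccursOnce (v.take m) v := (Hp_le_iff hmv).mp le_rfl
  have hw : m + 1 ≤ (v ++ [x]).length := by simp; omega
  apply (Hp_le_iff hw).mpr
  -- occurrences of the length m+1 prefix of w
  refine ⟨0, occursAt_zero_iff_prefix.mpr (List.take_prefix _ _), ?_⟩
  intro j hj
  have hpre : (v ++ [x]).take m <+: (v ++ [x]).take (m + 1) :=
    List.take_isPrefix_take.mpr (Or.inl (by omega))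
  have hjm : OccursAt ((v ++ [x]).take m) (v ++ [x]) j := hj.mono_prefix hpre
  have hjlen := hj.length_le
  have hlen1 : ((v ++ [x]).take (m+1)).length = m + 1 := by simp; omega
  have hlenm : ((v ++ [x]).take m).length = m := by simp; omega
  rw [take_append_singleton hmv] at hjm
  rcases occ_cases hjm with hin | hend
  · rcases honce with ⟨j0, hj0, huniq⟩
    have := huniq _ hin
    have := huniq _ (occursAt_zero_iff_prefix.mpr (List.take_prefix m v))
    omega
  · have hltk : (List.take m v).length = m := by simp; omega
    rw [hlen1] at hjlen
    simp at hjlen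
    omega
/-! ### closed iff Hp increments -/

lemma closed_iff_Hp_succ (v : Word) (x : AB) :
    IsClosedWord (v ++ [x]) ↔ Hp (v ++ [x]) = Hp v + 1 := by
  constructor
  · rintro ⟨hne, b, hpre, hblen, hsuf, hocc⟩
    -- b occurs at 0 and at the end, which are distinct
    have hblenw : b.length ≤ (v ++ [x]).length := hpre.length_le
    have hlvx : (v ++ [x]).length = v.length + 1 := by simp
    have hbv : b.length ≤ v.length := by omega
    have h0 : OccursAt b (v ++ [x]) 0 := occursAt_zero_iff_prefix.mpr hpre
    have hsocc : OccursAt b (v ++ [x]) ((v ++ [x]).length - b.length) := suffix_occursAt hsuf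
    have hnonce : ¬ OccursOnce b (v ++ [x]) := by
      rintro ⟨j, hj, huniq⟩
      have := huniq _ h0
      have := huniq _ hsocc
      omega
    -- b = (v ++ [x]).take b.length, so Hp w > b.length
    have hbtake : b = (v ++ [x]).take b.length := List.prefix_iff_eq_take.mp hpre
    have hH : b.length < Hp (v ++ [x]) := by
      by_contra hcon
      push_neg at hcon
      exact hnonce (hbtake ▸ (Hp_le_iff (by omega)).mp hcon)
    -- b occurs once in v
    have hbpv : b <+: v := by
      rw [List.prefix_iff_eq_take.mp hpre, take_append_singleton hbv]
      exact List.take_prefix _ _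
    have honcev : OccursOnce b v := by
      refine ⟨0, occursAt_zero_iff_prefix.mpr hbpv, ?_⟩
      intro j hj
      have hjw := hj.append_right (z := [x])
      rcases hocc _ hjw with h | h
      · exact h
      · have := hj.length_le; simp at h; omega
    have hHv : Hp v ≤ b.length := by
      have := (Hp_le_iff hbv).mpr (by rwa [List.prefix_iff_eq_take.mp hbpv] at honcev)
      omega
    have := Hp_mono_snoc v x
    have := Hp_snoc_le v x
    omega
  · intro hstep
    have hm := Hp_le_length v
    set m := Hp v with hmdef
    refine ⟨by simp, (v ++ [x]).take m, List.take_prefix _ _, ?_, ?_, ?_⟩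
    · simp; omega
    · -- the prefix of length m is a suffix of w
      have hmw : m ≤ (v ++ [x]).length := by simp; omega
      have hnotonce : ¬ OccursOnce ((v ++ [x]).take m) (v ++ [x]) := by
        intro h
        have := (Hp_le_iff hmw).mpr h
        omega
      have honcev : OccursOnce (v.take m) v := (Hp_le_iff hm).mp le_rfl
      have h0 : OccursAt ((v ++ [x]).take m) (v ++ [x]) 0 :=
        occursAt_zero_iff_prefix.mpr (List.take_prefix _ _)
      have hrep : ∃ i, i ≠ 0 ∧ OccursAt ((v ++ [x]).take m) (v ++ [x]) i := by
        by_contra hcon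
        push_neg at hcon
        exact hnotonce ⟨0, h0, fun j hj => by
          by_contra hj0; exact hcon j hj0 hj⟩
      rcases hrep with ⟨i, hi0, hi⟩
      rw [take_append_singleton hm] at hi
      rcases occ_cases hi with hin | hend
      · exfalso
        rcases honcev with ⟨j0, hj0, huniq⟩
        have := huniq _ hin
        have := huniq _ (occursAt_zero_iff_prefix.mpr (List.take_prefix m v))
        omega
      · have := hi.suffix_of_end (by simpa using hend)
        rwa [take_append_singleton hm]
    · -- occurrences only at 0 or end
      intro i hi
      rw [take_append_singleton hm] at hi
      have hltake : (v.take m).length = m := by simp; omega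
      rcases occ_cases hi with hin | hend
      · left
        rcases (Hp_le_iff hm).mp le_rfl with ⟨j0, hj0, huniq⟩
        have := huniq _ hin
        have := huniq _ (occursAt_zero_iff_prefix.mpr (List.take_prefix m v))
        omega
      · right
        have : ((v ++ [x]).take m).length = m := by simp; omega
        simp [this, hltake] at hend ⊢
        omega

lemma Hp_snoc_of_not_closed {v : Word} {x : AB} (h : ¬ IsClosedWord (v ++ [x])) :
    Hp (v ++ [x]) = Hp v := by
  have h1 := Hp_mono_snoc v x
  have h2 := Hp_snoc_le v x
  rw [closed_iff_Hp_succ] at h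
  omega

open scoped Classical in
noncomputable def closedCount (w : Word) : ℕ :=
  ((Finset.Icc 1 w.length).filter (fun n => IsClosedWord (w.take n))).card

open Finset in
lemma Hp_eq_closedCount (w : Word) : Hp w = closedCount w := by
  classical
  induction w using List.reverseRecOn with
  | nil =>
      have : Hp ([] : Word) = 0 := by
        have := Hp_le_length ([] : Word); simpa using this
      simp [closedCount, this]
  | append_singleton v x ih =>
      have hlen : (v ++ [x]).length = v.length + 1 := by simp
      have hicc : Finset.Icc 1 (v.length + 1) = insert (v.length + 1) (Finset.Icc 1 v.length) := by
        ext n; simp [Finset.mem_Icc, Finset.mem_insert]; omega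
      have htake_eq : ∀ n ∈ Finset.Icc 1 v.length,
          IsClosedWord ((v ++ [x]).take n) ↔ IsClosedWord (v.take n) := by
        intro n hn
        rw [Finset.mem_Icc] at hn
        rw [take_append_singleton hn.2]
      have hfull : (v ++ [x]).take (v.length + 1) = v ++ [x] := by
        apply List.take_of_length_le; simp
      have hcard : closedCount (v ++ [x]) =
          closedCount v + (if IsClosedWord (v ++ [x]) then 1 else 0) := by
        unfold closedCount
        rw [hlen, hicc, Finset.filter_insert]
        have hfilter_eq : (Finset.Icc 1 v.length).filter (fun n => IsClosedWord ((v ++ [x]).take n))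
            = (Finset.Icc 1 v.length).filter (fun n => IsClosedWord (v.take n)) :=
          Finset.filter_congr (by intro n hn; exact htake_eq n hn)
        by_cases hc : IsClosedWord (v ++ [x])
        · rw [if_pos (by rwa [hfull]), if_pos hc, Finset.card_insert_of_notMem (by
            simp [Finset.mem_filter, Finset.mem_Icc]), hfilter_eq]
        · rw [if_neg (by rwa [hfull]), if_neg hc, hfilter_eq]
          omega
      by_cases hc : IsClosedWord (v ++ [x])
      · rw [hcard, if_pos hc, ← ih, ← (closed_iff_Hp_succ v x).mp hc]
      · rw [hcard, if_neg hc, ← ih, Hp_snoc_of_not_closed hc]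
        omega
/-! ### Factor complexity machinery -/

instance : Fintype AB := ⟨{AB.a, AB.b}, fun x => by cases x <;> simp⟩

open scoped Classical

noncomputable def FF (w : Word) (n : ℕ) : Finset Word :=
  ((Finset.range (w.length + 1)).image (fun i => (w.drop i).take n)).filter
    (fun u => u.length = n)

lemma mem_FF {w u : Word} {n : ℕ} : u ∈ FF w n ↔ u <:+: w ∧ u.length = n := by
  unfold FF
  simp only [Finset.mem_filter, Finset.mem_image, Finset.mem_range]
  constructor
  · rintro ⟨⟨i, hi, rfl⟩, hlen⟩
    exact ⟨(((w.drop i).take_prefix n).isInfix).trans (w.drop_suffix i).isInfix, hlen⟩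
  · rintro ⟨hinf, hlen⟩
    refine ⟨?_, hlen⟩
    rcases infix_iff_exists_occursAt.mp hinf with ⟨i, hocc⟩
    refine ⟨i, by have := hocc.length_le; omega, ?_⟩
    rw [← hlen]
    exact hocc.2
  
lemma FF_zero (w : Word) : FF w 0 = {([] : Word)} := by
  ext u
  simp [mem_FF, List.length_eq_zero_iff]
  rintro rfl
  simp

lemma FF_eq_empty {w : Word} {n : ℕ} (h : w.length < n) : FF w n = ∅ := by
  ext u
  simp only [mem_FF, Finset.notMem_empty, iff_false, not_and]
  intro hinf hlen
  have := hinf.length_le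
  omega

noncomputable def sC (w : Word) (n : ℕ) : ℕ :=
  ((FF w n).filter (fun u => IsRightSpecial u w)).card

noncomputable def tC (w : Word) (n : ℕ) : ℕ :=
  ((FF w n).filter (fun u => IsLeftSpecial u w)).card

noncomputable def eK (w : Word) (n : ℕ) : ℕ :=
  if Kp w ≤ n ∧ n ≤ w.length then 1 else 0

noncomputable def eH (w : Word) (n : ℕ) : ℕ :=
  if Hp w ≤ n ∧ n ≤ w.length then 1 else 0

lemma sC_eq_zero_iff {w : Word} {n : ℕ} : sC w n = 0 ↔ Rp w ≤ n := by
  rw [Rp_le_iff, sC, Finset.card_eq_zero, Finset.filter_eq_empty_iff]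
  constructor
  · intro h u hlen hrs
    exact h (mem_FF.mpr ⟨(u.prefix_append [AB.a]).isInfix.trans hrs.1, hlen⟩) hrs
  · intro h u hu
    exact h u (mem_FF.mp hu).2

lemma tC_eq_zero_iff {w : Word} {n : ℕ} : tC w n = 0 ↔ Lp w ≤ n := by
  rw [Lp_le_iff, tC, Finset.card_eq_zero, Finset.filter_eq_empty_iff]
  constructor
  · intro h u hlen hls
    refine h (mem_FF.mpr ⟨?_, hlen⟩) hls
    exact (List.suffix_append [AB.a] u).isInfix.trans hls.1
  · intro h u hu
    exact h u (mem_FF.mp hu).2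
/-! ### The complexity recurrences -/

open scoped Classical

lemma nonextR_filter (w : Word) (n : ℕ) :
    (FF w n).filter (fun v => ∀ c : AB, ¬ (v ++ [c]) <:+: w) =
      if Kp w ≤ n ∧ n ≤ w.length then {w.drop (w.length - n)} else ∅ := by
  split_ifs with hc
  · obtain ⟨hK, hn⟩ := hc
    have hsuflen : (w.drop (w.length - n)).length = n := length_drop_sub hn
    have honce : OccursOnce (w.drop (w.length - n)) w := (Kp_le_iff hn).mp hK
    ext v
    simp only [Finset.mem_filter, mem_FF, Finset.mem_singleton]
    constructor
    · rintro ⟨⟨hinf, hlen⟩, hnext⟩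
      rcases infix_iff_exists_occursAt.mp hinf with ⟨i, hocc⟩
      have hend : i + n = w.length := by
        rcases Nat.lt_or_ge (i + n) w.length with hlt | hge
        · exfalso
          rcases hocc.extend_right (by omega : i + v.length < w.length) with ⟨c, hc⟩
          exact hnext c (infix_iff_exists_occursAt.mpr ⟨i, hc⟩)
        · have := hocc.length_le; omega
      have hsuf : v <:+ w := hocc.suffix_of_end (by omega)
      rw [List.suffix_iff_eq_drop.mp hsuf, hlen]
    · rintro rfl
      refine ⟨⟨(w.drop_suffix _).isInfix, hsuflen⟩, ?_⟩
      intro c hcinf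
      rcases infix_iff_exists_occursAt.mp hcinf with ⟨i, hocc⟩
      have hlenc : (w.drop (w.length - n) ++ [c]).length = n + 1 := by simp [hsuflen]
      have hle := hocc.length_le
      rw [hlenc] at hle
      have hvocc : OccursAt (w.drop (w.length - n)) w i :=
        hocc.mono_prefix (List.prefix_append _ _)
      rcases honce with ⟨j0, hj0, huniq⟩
      have h1 := huniq _ hvocc
      have h2 := huniq _ (by
        have := suffix_occursAt (w.drop_suffix (w.length - n))
        rwa [hsuflen] at this)
      omega
  · ext v
    simp only [Finset.mem_filter, mem_FF, Finset.notMem_empty, iff_false, not_and]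
    rintro ⟨hinf, hlen⟩ hnext
    rcases infix_iff_exists_occursAt.mp hinf with ⟨i, hocc⟩
    have hn : n ≤ w.length := by have := hinf.length_le; omega
    have hend : i + n = w.length := by
      rcases Nat.lt_or_ge (i + n) w.length with hlt | hge
      · exfalso
        rcases hocc.extend_right (by omega : i + v.length < w.length) with ⟨c, hc⟩
        exact hnext c (infix_iff_exists_occursAt.mpr ⟨i, hc⟩)
      · have := hocc.length_le; omega
    have hsuf : v <:+ w := hocc.suffix_of_end (by omega)
    have hveq : v = w.drop (w.length - n) := by
      rw [List.suffix_iff_eq_drop.mp hsuf, hlen]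
    -- v occurs once, so Kp w ≤ n, contradicting hc
    apply hc
    refine ⟨?_, hn⟩
    rw [Kp_le_iff hn]
    refine ⟨i, hveq ▸ hocc, ?_⟩
    intro j hj
    -- every occurrence of the suffix must end at the end
    have hjend : j + n = w.length := by
      rcases Nat.lt_or_ge (j + n) w.length with hlt | hge
      · exfalso
        have hjv : OccursAt v w j := hveq ▸ hj
        rcases hjv.extend_right (by omega : j + v.length < w.length) with ⟨c, hcj⟩
        exact hnext c (infix_iff_exists_occursAt.mpr ⟨j, hcj⟩)
      · have := hj.length_le
        rw [length_drop_sub hn] at this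
        omega
    omega

lemma nonextL_filter (w : Word) (n : ℕ) :
    (FF w n).filter (fun v => ∀ c : AB, ¬ ([c] ++ v) <:+: w) =
      if Hp w ≤ n ∧ n ≤ w.length then {w.take n} else ∅ := by
  split_ifs with hc
  · obtain ⟨hH, hn⟩ := hc
    have hlen : (w.take n).length = n := by simp; omega
    have honce : OccursOnce (w.take n) w := (Hp_le_iff hn).mp hH
    ext v
    simp only [Finset.mem_filter, mem_FF, Finset.mem_singleton]
    constructor
    · rintro ⟨⟨hinf, hvlen⟩, hnext⟩
      rcases infix_iff_exists_occursAt.mp hinf with ⟨i, hocc⟩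
      have hi0 : i = 0 := by
        rcases Nat.eq_zero_or_pos i with h0 | hpos
        · exact h0
        · exfalso
          obtain ⟨i', rfl⟩ : ∃ i', i = i' + 1 := ⟨i - 1, by omega⟩
          rcases hocc.extend_left with ⟨c, hcocc⟩
          exact hnext c (infix_iff_exists_occursAt.mpr ⟨i', hcocc⟩)
      subst hi0
      have := occursAt_zero_iff_prefix.mp hocc
      rw [List.prefix_iff_eq_take.mp this, hvlen]
    · rintro rfl
      refine ⟨⟨(List.take_prefix _ _).isInfix, hlen⟩, ?_⟩
      intro c hcinf
      rcases infix_iff_exists_occursAt.mp hcinf with ⟨i, hocc⟩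
      have hvocc : OccursAt (w.take n) w (i + 1) := by
        have := hocc.mono_suffix (List.suffix_append [c] (w.take n))
        simpa [hlen] using this
      rcases honce with ⟨j0, hj0, huniq⟩
      have h1 := huniq _ hvocc
      have h2 := huniq _ (occursAt_zero_iff_prefix.mpr (List.take_prefix n w))
      omega
  · ext v
    simp only [Finset.mem_filter, mem_FF, Finset.notMem_empty, iff_false, not_and]
    rintro ⟨hinf, hvlen⟩ hnext
    have hn : n ≤ w.length := by have := hinf.length_le; omega
    have hall0 : ∀ j, OccursAt v w j → j = 0 := by
      intro j hj
      rcases Nat.eq_zero_or_pos j with h0 | hpos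
      · exact h0
      · exfalso
        obtain ⟨j', rfl⟩ : ∃ j', j = j' + 1 := ⟨j - 1, by omega⟩
        rcases hj.extend_left with ⟨c, hcocc⟩
        exact hnext c (infix_iff_exists_occursAt.mpr ⟨j', hcocc⟩)
    rcases infix_iff_exists_occursAt.mp hinf with ⟨i, hocc⟩
    have hi0 := hall0 _ hocc
    subst hi0
    have hvpre := occursAt_zero_iff_prefix.mp hocc
    have hveq : v = w.take n := by rw [List.prefix_iff_eq_take.mp hvpre, hvlen]
    apply hc
    refine ⟨?_, hn⟩
    rw [Hp_le_iff hn]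
    exact ⟨0, hveq ▸ hocc, fun j hj => hall0 j (hveq ▸ hj)⟩
open scoped Classical

lemma extR_pointwise (w : Word) (n : ℕ) (v : Word) :
    ((Finset.univ : Finset AB).filter (fun c => (v ++ [c]) <:+: w)).card
      + (if ∀ c : AB, ¬ (v ++ [c]) <:+: w then 1 else 0)
      = 1 + (if IsRightSpecial v w then 1 else 0) := by
  have huniv : (Finset.univ : Finset AB) = {AB.a, AB.b} := rfl
  by_cases ha : (v ++ [AB.a]) <:+: w <;> by_cases hb : (v ++ [AB.b]) <:+: w <;>
    · rw [huniv]
      rw [show ({AB.a, AB.b} : Finset AB).filter (fun c => (v ++ [c]) <:+: w)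
          = if (v ++ [AB.a]) <:+: w then (if (v ++ [AB.b]) <:+: w then {AB.a, AB.b} else {AB.a})
            else (if (v ++ [AB.b]) <:+: w then {AB.b} else ∅) from by
        ext c; cases c <;> simp [ha, hb] ]
      have hall : (∀ c : AB, ¬ (v ++ [c]) <:+: w) ↔
          (¬ (v ++ [AB.a]) <:+: w ∧ ¬ (v ++ [AB.b]) <:+: w) :=
        ⟨fun h => ⟨h _, h _⟩, fun h c => by cases c; exacts [h.1, h.2]⟩
      simp [ha, hb, hall, IsRightSpecial]

lemma extL_pointwise (w : Word) (n : ℕ) (v : Word) :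
    ((Finset.univ : Finset AB).filter (fun c => ([c] ++ v) <:+: w)).card
      + (if ∀ c : AB, ¬ ([c] ++ v) <:+: w then 1 else 0)
      = 1 + (if IsLeftSpecial v w then 1 else 0) := by
  simp only [List.singleton_append]
  have huniv : (Finset.univ : Finset AB) = {AB.a, AB.b} := rfl
  by_cases ha : (AB.a :: v) <:+: w <;> by_cases hb : (AB.b :: v) <:+: w <;>
    · rw [huniv]
      rw [show ({AB.a, AB.b} : Finset AB).filter (fun c => (c :: v) <:+: w)
          = if (AB.a :: v) <:+: w then (if (AB.b :: v) <:+: w then {AB.a, AB.b} else {AB.a})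
            else (if (AB.b :: v) <:+: w then {AB.b} else ∅) from by
        ext c; cases c <;> simp [ha, hb] ]
      have hall : (∀ c : AB, ¬ (c :: v) <:+: w) ↔
          (¬ (AB.a :: v) <:+: w ∧ ¬ (AB.b :: v) <:+: w) :=
        ⟨fun h => ⟨h _, h _⟩, fun h c => by cases c; exacts [h.1, h.2]⟩
      simp [ha, hb, hall, IsLeftSpecial, List.singleton_append]

lemma fiberR (w : Word) (n : ℕ) (v : Word) (hv : v ∈ FF w n) :
    (FF w (n+1)).filter (fun u => u.take n = v) =
      ((Finset.univ : Finset AB).filter (fun c => (v ++ [c]) <:+: w)).image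
        (fun c => v ++ [c]) := by
  rcases mem_FF.mp hv with ⟨hvinf, hvlen⟩
  ext u
  simp only [Finset.mem_filter, mem_FF, Finset.mem_image, Finset.mem_univ, true_and]
  constructor
  · rintro ⟨⟨hinf, hlen⟩, htake⟩
    have hdrop : (u.drop n).length = 1 := by simp [hlen]
    rcases List.length_eq_one_iff.mp hdrop with ⟨c, hc⟩
    have hu : u = v ++ [c] := by
      conv_lhs => rw [← List.take_append_drop n u, htake, hc]
    exact ⟨c, hu ▸ hinf, hu.symm⟩
  · rintro ⟨c, hcinf, rfl⟩
    refine ⟨⟨hcinf, by simp [hvlen]⟩, ?_⟩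
    rw [← hvlen]
    exact List.take_left (l₁ := v) (l₂ := [c])

lemma fiberL (w : Word) (n : ℕ) (v : Word) (hv : v ∈ FF w n) :
    (FF w (n+1)).filter (fun u => u.drop 1 = v) =
      ((Finset.univ : Finset AB).filter (fun c => ([c] ++ v) <:+: w)).image
        (fun c => [c] ++ v) := by
  rcases mem_FF.mp hv with ⟨hvinf, hvlen⟩
  ext u
  simp only [Finset.mem_filter, mem_FF, Finset.mem_image, Finset.mem_univ, true_and]
  constructor
  · rintro ⟨⟨hinf, hlen⟩, hdrop⟩
    have htk : (u.take 1).length = 1 := by simp [hlen]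
    rcases List.length_eq_one_iff.mp htk with ⟨c, hc⟩
    have hu : u = [c] ++ v := by
      conv_lhs => rw [← List.take_append_drop 1 u, hdrop, hc]
    exact ⟨c, hu ▸ hinf, hu.symm⟩
  · rintro ⟨c, hcinf, rfl⟩
    exact ⟨⟨hcinf, by simp [hvlen]⟩, by simp⟩

lemma card_recurrence_R (w : Word) (n : ℕ) :
    (FF w (n+1)).card + eK w n = (FF w n).card + sC w n := by
  have hmaps : ∀ u ∈ FF w (n+1), u.take n ∈ FF w n := by
    intro u hu
    rcases mem_FF.mp hu with ⟨hinf, hlen⟩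
    exact mem_FF.mpr ⟨(u.take_prefix n).isInfix.trans hinf, by simp [hlen]⟩
  rw [Finset.card_eq_sum_card_fiberwise hmaps]
  have hfib : ∀ v ∈ FF w n,
      ((FF w (n+1)).filter (fun u => u.take n = v)).card =
      ((Finset.univ : Finset AB).filter (fun c => (v ++ [c]) <:+: w)).card := by
    intro v hv
    rw [fiberR w n v hv]
    exact Finset.card_image_of_injective _ (fun c c' h => by simpa using h)
  rw [Finset.sum_congr rfl hfib]
  have key : ∑ v ∈ FF w n, (((Finset.univ : Finset AB).filter
        (fun c => (v ++ [c]) <:+: w)).card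
      + (if ∀ c : AB, ¬ (v ++ [c]) <:+: w then 1 else 0))
      = ∑ v ∈ FF w n, (1 + (if IsRightSpecial v w then 1 else 0)) :=
    Finset.sum_congr rfl (fun v _ => extR_pointwise w n v)
  rw [Finset.sum_add_distrib, Finset.sum_add_distrib] at key
  have h1 : ∑ v ∈ FF w n, (if ∀ c : AB, ¬ (v ++ [c]) <:+: w then 1 else 0) = eK w n := by
    rw [Finset.sum_boole, nonextR_filter w n, eK]
    split_ifs <;> simp
  have h2 : ∑ v ∈ FF w n, (if IsRightSpecial v w then 1 else 0) = sC w n := by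
    rw [Finset.sum_boole, sC]; simp
  have h3 : ∑ _v ∈ FF w n, (1:ℕ) = (FF w n).card := by simp
  omega

lemma card_recurrence_L (w : Word) (n : ℕ) :
    (FF w (n+1)).card + eH w n = (FF w n).card + tC w n := by
  have hmaps : ∀ u ∈ FF w (n+1), u.drop 1 ∈ FF w n := by
    intro u hu
    rcases mem_FF.mp hu with ⟨hinf, hlen⟩
    exact mem_FF.mpr ⟨(u.drop_suffix 1).isInfix.trans hinf, by simp [hlen]⟩
  rw [Finset.card_eq_sum_card_fiberwise hmaps]
  have hfib : ∀ v ∈ FF w n,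
      ((FF w (n+1)).filter (fun u => u.drop 1 = v)).card =
      ((Finset.univ : Finset AB).filter (fun c => ([c] ++ v) <:+: w)).card := by
    intro v hv
    rw [fiberL w n v hv]
    exact Finset.card_image_of_injective _ (fun c c' h => by simpa using h)
  rw [Finset.sum_congr rfl hfib]
  have key : ∑ v ∈ FF w n, (((Finset.univ : Finset AB).filter
        (fun c => ([c] ++ v) <:+: w)).card
      + (if ∀ c : AB, ¬ ([c] ++ v) <:+: w then 1 else 0))
      = ∑ v ∈ FF w n, (1 + (if IsLeftSpecial v w then 1 else 0)) :=
    Finset.sum_congr rfl (fun v _ => extL_pointwise w n v)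
  rw [Finset.sum_add_distrib, Finset.sum_add_distrib] at key
  have h1 : ∑ v ∈ FF w n, (if ∀ c : AB, ¬ ([c] ++ v) <:+: w then 1 else 0) = eH w n := by
    rw [Finset.sum_boole, nonextL_filter w n, eH]
    split_ifs <;> simp
  have h2 : ∑ v ∈ FF w n, (if IsLeftSpecial v w then 1 else 0) = tC w n := by
    rw [Finset.sum_boole, tC]; simp
  have h3 : ∑ _v ∈ FF w n, (1:ℕ) = (FF w n).card := by simp
  omega
open scoped Classical

lemma sum_eK (w : Word) :
    ∑ n ∈ Finset.range (w.length + 1), eK w n = w.length + 1 - Kp w := by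
  have hcong : ∀ n ∈ Finset.range (w.length + 1),
      eK w n = if Kp w ≤ n then 1 else 0 := by
    intro n hn
    rw [Finset.mem_range] at hn
    unfold eK
    split_ifs with h1 h2 h2 <;> first | rfl | (exfalso; omega) | (exfalso; exact h1 ⟨h2, by omega⟩)
  rw [Finset.sum_congr rfl hcong, Finset.sum_boole]
  have : (Finset.range (w.length + 1)).filter (fun n => Kp w ≤ n)
      = Finset.Ico (Kp w) (w.length + 1) := by
    ext n; simp [Finset.mem_Ico, Finset.mem_filter, Finset.mem_range]; omega
  rw [this]
  simp [Nat.card_Ico]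

lemma sum_eH (w : Word) :
    ∑ n ∈ Finset.range (w.length + 1), eH w n = w.length + 1 - Hp w := by
  have hcong : ∀ n ∈ Finset.range (w.length + 1),
      eH w n = if Hp w ≤ n then 1 else 0 := by
    intro n hn
    rw [Finset.mem_range] at hn
    unfold eH
    split_ifs with h1 h2 h2 <;> first | rfl | (exfalso; omega) | (exfalso; exact h1 ⟨h2, by omega⟩)
  rw [Finset.sum_congr rfl hcong, Finset.sum_boole]
  have : (Finset.range (w.length + 1)).filter (fun n => Hp w ≤ n)
      = Finset.Ico (Hp w) (w.length + 1) := by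
    ext n; simp [Finset.mem_Ico, Finset.mem_filter, Finset.mem_range]; omega
  rw [this]
  simp [Nat.card_Ico]

lemma telescope_FF (w : Word) (m : ℕ) :
    ∑ n ∈ Finset.range m, (FF w (n+1)).card + (FF w 0).card
      = ∑ n ∈ Finset.range m, (FF w n).card + (FF w m).card := by
  have h1 := Finset.sum_range_succ (fun n => (FF w n).card) m
  have h2 := Finset.sum_range_succ' (fun n => (FF w n).card) m
  omega

lemma sum_sC (w : Word) :
    ∑ n ∈ Finset.range (w.length + 1), sC w n + Kp w = w.length := by
  have hrec : ∀ n ∈ Finset.range (w.length + 1),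
      (FF w (n+1)).card + eK w n = (FF w n).card + sC w n :=
    fun n _ => card_recurrence_R w n
  have hsum := Finset.sum_congr rfl hrec
  rw [Finset.sum_add_distrib, Finset.sum_add_distrib, sum_eK] at hsum
  have htel := telescope_FF w (w.length + 1)
  have h0 : (FF w 0).card = 1 := by rw [FF_zero]; rfl
  have hend : (FF w (w.length + 1)).card = 0 := by rw [FF_eq_empty (by omega)]; rfl
  have hK := Kp_le_length w
  omega

lemma sum_tC (w : Word) :
    ∑ n ∈ Finset.range (w.length + 1), tC w n + Hp w = w.length := by
  have hrec : ∀ n ∈ Finset.range (w.length + 1),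
      (FF w (n+1)).card + eH w n = (FF w n).card + tC w n :=
    fun n _ => card_recurrence_L w n
  have hsum := Finset.sum_congr rfl hrec
  rw [Finset.sum_add_distrib, Finset.sum_add_distrib, sum_eH] at hsum
  have htel := telescope_FF w (w.length + 1)
  have h0 : (FF w 0).card = 1 := by rw [FF_zero]; rfl
  have hend : (FF w (w.length + 1)).card = 0 := by rw [FF_eq_empty (by omega)]; rfl
  have hH := Hp_le_length w
  omega

lemma st_relation (w : Word) (n : ℕ) : tC w n + eK w n = sC w n + eH w n := by
  have h1 := card_recurrence_R w n
  have h2 := card_recurrence_L w n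
  omega

/-- The general inequality `Lp w + Hp w ≤ |w|`. -/
lemma Lp_add_Hp_le (w : Word) : Lp w + Hp w ≤ w.length := by
  have hsum := sum_tC w
  have hL := Lp_le_length w
  have hpos : ∀ n ∈ Finset.range (Lp w), 1 ≤ tC w n := by
    intro n hn
    rw [Finset.mem_range] at hn
    have : ¬ (tC w n = 0) := by
      rw [tC_eq_zero_iff]; omega
    omega
  have hsub : Finset.range (Lp w) ⊆ Finset.range (w.length + 1) := by
    apply Finset.range_subset_range.mpr; omega
  have hge : Lp w ≤ ∑ n ∈ Finset.range (w.length + 1), tC w n := by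
    calc Lp w = ∑ _n ∈ Finset.range (Lp w), 1 := by simp
    _ ≤ ∑ n ∈ Finset.range (Lp w), tC w n := Finset.sum_le_sum hpos
    _ ≤ ∑ n ∈ Finset.range (w.length + 1), tC w n :=
        Finset.sum_le_sum_of_subset hsub
  omega

/-- For a trapezoidal word there is exactly one right special factor of each length `< Rp w`. -/
lemma sC_eq_one_of_trapezoidal {w : Word} (hw : IsTrapezoidal w) {n : ℕ} (hn : n < Rp w) :
    sC w n = 1 := by
  have hsum := sum_sC w
  have hR := Rp_le_length w
  have hsplit : ∑ n ∈ Finset.range (w.length + 1), sC w n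
      = ∑ n ∈ Finset.range (Rp w), sC w n := by
    rw [← Finset.sum_range_add_sum_Ico _ (show Rp w ≤ w.length + 1 by omega)]
    have : ∑ n ∈ Finset.Ico (Rp w) (w.length + 1), sC w n = 0 := by
      apply Finset.sum_eq_zero
      intro m hm
      rw [Finset.mem_Ico] at hm
      rw [sC_eq_zero_iff]
      exact hm.1
    omega
  have hRsum : ∑ n ∈ Finset.range (Rp w), sC w n = Rp w := by
    rw [← hsplit]
    unfold IsTrapezoidal at hw
    omega
  have hpos : ∀ m ∈ Finset.range (Rp w), 1 ≤ sC w m := by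
    intro m hm
    rw [Finset.mem_range] at hm
    have : ¬ (sC w m = 0) := by rw [sC_eq_zero_iff]; omega
    omega
  by_contra hne
  have h2 : 2 ≤ sC w n := by
    have := hpos n (Finset.mem_range.mpr hn); omega
  have : ∑ _m ∈ Finset.range (Rp w), 1 < ∑ m ∈ Finset.range (Rp w), sC w m := by
    apply Finset.sum_lt_sum hpos
    exact ⟨n, Finset.mem_range.mpr hn, by omega⟩
  simp at this
  omega
open scoped Classical

/-- Key combinatorial fact: a trapezoidal word cannot have `Hp w < min (Kp w) (Rp w)`. -/
lemma not_Hp_lt_min {w : Word} (hw : IsTrapezoidal w) (hK : Hp w < Kp w)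
    (hR : Hp w < Rp w) : False := by
  have hKlen := Kp_le_length w
  have hwne : w ≠ [] := by
    intro hnil; subst hnil; simp at hKlen; omega
  have hwpos : 1 ≤ w.length := List.length_pos_iff.mpr hwne
  have h1 := one_le_Hp hwne
  set h := Hp w with hh
  have hHlen : h ≤ w.length := Hp_le_length w
  have hhm : h - 1 < w.length := by omega
  have hp1len : (w.take (h-1)).length = h - 1 := by simp; omega
  have honce_p : OccursOnce (w.take h) w := (Hp_le_iff hHlen).mp le_rfl
  have hnotonce_p1 : ¬ OccursOnce (w.take (h-1)) w := by
    intro hh'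
    have := (Hp_le_iff (show h - 1 ≤ w.length by omega)).mpr hh'
    omega
  have h0occ : OccursAt (w.take (h-1)) w 0 :=
    occursAt_zero_iff_prefix.mpr (List.take_prefix _ _)
  have hrep : ∃ i, i ≠ 0 ∧ OccursAt (w.take (h-1)) w i := by
    by_contra hcon
    push_neg at hcon
    exact hnotonce_p1 ⟨0, h0occ, fun j hj => by
      by_contra hj0; exact hcon j hj0 hj⟩
  obtain ⟨x, hp⟩ : ∃ x, w.take h = w.take (h-1) ++ [x] := by
    refine ⟨w[h-1]'hhm, ?_⟩
    conv_lhs => rw [show h = (h-1)+1 by omega]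
    rw [List.take_succ, List.getElem?_eq_getElem hhm]
    rfl
  by_cases hcase : ∃ i, i ≠ 0 ∧ i + (h-1) < w.length ∧ OccursAt (w.take (h-1)) w i
  · -- Case 1 : p1 has an internal occurrence, hence p1 is right special
    obtain ⟨i, hi0, hiend, hiocc⟩ := hcase
    obtain ⟨c, hcocc⟩ := hiocc.extend_right (by rw [hp1len]; omega)
    have hcx : c ≠ x := by
      rintro rfl
      rcases honce_p with ⟨j, hj, huniq⟩
      have h1' := huniq _ (occursAt_zero_iff_prefix.mpr (List.take_prefix h w))
      have h2' := huniq i (by rw [hp]; exact hcocc)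
      omega
    have hax : w.take (h-1) ++ [x] <:+: w := by
      rw [← hp]; exact (List.take_prefix h w).isInfix
    have hac : w.take (h-1) ++ [c] <:+: w := infix_iff_exists_occursAt.mpr ⟨i, hcocc⟩
    have hd : ∀ d : AB, d = x ∨ d = c := by
      intro d; cases d <;> cases x <;> cases c <;> simp_all
    have hall : ∀ d : AB, w.take (h-1) ++ [d] <:+: w := fun d =>
      (hd d).elim (fun h' => h' ▸ hax) (fun h' => h' ▸ hac)
    have hRS : IsRightSpecial (w.take (h-1)) w := ⟨hall _, hall _⟩
    -- the unique right special factor of length h-1 is p1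
    have hcard : sC w (h-1) = 1 := sC_eq_one_of_trapezoidal hw (by omega)
    obtain ⟨u, hulen, huRS⟩ := exists_RS_iff_lt_Rp.mpr (show h < Rp w by omega)
    have humem : u.drop 1 ∈ (FF w (h-1)).filter (fun v => IsRightSpecial v w) := by
      refine Finset.mem_filter.mpr ⟨mem_FF.mpr ⟨?_, by simp [hulen]⟩, huRS.drop_one⟩
      exact ((u.drop_suffix 1).isInfix).trans
        ((u.prefix_append [AB.a]).isInfix.trans huRS.1)
    have hp1mem : w.take (h-1) ∈ (FF w (h-1)).filter (fun v => IsRightSpecial v w) :=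
      Finset.mem_filter.mpr ⟨mem_FF.mpr ⟨(List.take_prefix _ _).isInfix, hp1len⟩, hRS⟩
    have hueq : u.drop 1 = w.take (h-1) :=
      Finset.card_le_one.mp (le_of_eq hcard) _ humem _ hp1mem
    -- u ++ [x] is a factor; but it ends with the unrepeated prefix of length h
    have hux : u ++ [x] <:+: w := by cases x; exacts [huRS.1, huRS.2]
    rcases infix_iff_exists_occursAt.mp hux with ⟨t, htocc⟩
    have hsuf : (w.take (h-1) ++ [x]) <:+ (u ++ [x]) := by
      refine ⟨u.take 1, ?_⟩
      rw [← List.append_assoc]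
      congr 1
      rw [← hueq, List.take_append_drop]
    have hpocc := htocc.mono_suffix hsuf
    have hlen1 : (u ++ [x]).length = h + 1 := by simp [hulen]
    have hlen2 : (w.take (h-1) ++ [x]).length = h := by simp [hp1len]; omega
    rw [hlen1, hlen2] at hpocc
    rcases honce_p with ⟨j, hj, huniq⟩
    have h1' := huniq _ (occursAt_zero_iff_prefix.mpr (List.take_prefix h w))
    have h2' := huniq (t + (h + 1 - h)) (by rw [hp]; exact hpocc)
    omega
  · -- Case 2 : p1 occurs only as a prefix and as a suffix, so the suffix of
    -- length h occurs only once, contradicting h < Kp w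
    push_neg at hcase
    have hocc_cases : ∀ j, OccursAt (w.take (h-1)) w j → j = 0 ∨ j + (h-1) = w.length := by
      intro j hj
      rcases Nat.eq_zero_or_pos j with h0 | hpos
      · exact Or.inl h0
      · right
        have hle := hj.length_le
        rw [hp1len] at hle
        rcases Nat.lt_or_ge (j + (h-1)) w.length with hlt | hge
        · exact absurd hj (hcase j (by omega) hlt)
        · omega
    obtain ⟨i1, hi10, hi1occ⟩ := hrep
    have hi1end : i1 + (h-1) = w.length := by
      rcases hocc_cases _ hi1occ with h' | h'
      · exact absurd h' hi10
      · exact h'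
    have hp1suf : w.take (h-1) <:+ w := hi1occ.suffix_of_end (by rw [hp1len]; omega)
    have hp1drop : w.take (h-1) = w.drop (w.length - (h-1)) := by
      rw [List.suffix_iff_eq_drop.mp hp1suf, hp1len]
    have hshlen : (w.drop (w.length - h)).length = h := length_drop_sub hHlen
    have honce_sh : OccursOnce (w.drop (w.length - h)) w := by
      refine ⟨w.length - h, ?_, ?_⟩
      · have := suffix_occursAt (w.drop_suffix (w.length - h))
        rwa [hshlen] at this
      · intro j hj
        have hdd : (w.drop (w.length - h)).drop 1 = w.drop (w.length - (h-1)) := by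
          rw [List.drop_drop]; congr 1; omega
        have hjocc := hj.mono_suffix (List.drop_suffix 1 (w.drop (w.length - h)))
        have hdlen : ((w.drop (w.length - h)).drop 1).length = h - 1 := by
          simp; omega
        rw [hshlen, hdlen] at hjocc
        have hjp1 : OccursAt (w.take (h-1)) w (j + (h - (h - 1))) := by
          rw [hp1drop, ← hdd]
          exact hjocc
        rcases hocc_cases _ hjp1 with h' | h'
        · omega
        · have := hj.length_le
          rw [hshlen] at this
          omega
    have : Kp w ≤ h := (Kp_le_iff hHlen).mpr honce_sh
    omega
open scoped Classical

lemma M_A {w : Word} (hw : IsTrapezoidal w) (h1 : Kp w < Hp w) (h2 : Hp w < Rp w) :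
    False := by
  have hKlen := Kp_le_length w
  have hHlen := Hp_le_length w
  have hst1 := st_relation w (Kp w)
  have hst2 := st_relation w (Hp w)
  have heK1 : eK w (Kp w) = 1 := by
    unfold eK; split_ifs with hc <;> first | rfl | (exfalso; simp only [not_and, not_le] at hc; omega)
  have heH1 : eH w (Kp w) = 0 := by
    unfold eH; split_ifs with hc <;> first | rfl | (exfalso; omega) | (exfalso; simp only [not_and, not_le] at hc; omega)
  have hsC1 : sC w (Kp w) = 1 := sC_eq_one_of_trapezoidal hw (by omega)
  have htK : tC w (Kp w) = 0 := by omega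
  have hLK : Lp w ≤ Kp w := tC_eq_zero_iff.mp htK
  have heK2 : eK w (Hp w) = 1 := by
    unfold eK; split_ifs with hc <;> first | rfl | (exfalso; simp only [not_and, not_le] at hc; omega)
  have heH2 : eH w (Hp w) = 1 := by
    unfold eH; split_ifs with hc <;> first | rfl | (exfalso; simp only [not_and, not_le] at hc; omega)
  have hsC2 : sC w (Hp w) = 1 := sC_eq_one_of_trapezoidal hw (by omega)
  have htH : tC w (Hp w) = 1 := by omega
  have : ¬ (Lp w ≤ Hp w) := by
    intro hc
    have := tC_eq_zero_iff.mpr hc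
    omega
  omega

lemma M_B {w : Word} (hw : IsTrapezoidal w) (h1 : Rp w < Hp w) (h2 : Hp w < Kp w) :
    False := by
  have hRlen := Rp_le_length w
  have hHlen := Hp_le_length w
  have hst1 := st_relation w (Rp w)
  have hst2 := st_relation w (Hp w)
  have heK1 : eK w (Rp w) = 0 := by
    unfold eK; split_ifs with hc <;> first | rfl | (exfalso; omega) | (exfalso; simp only [not_and, not_le] at hc; omega)
  have heH1 : eH w (Rp w) = 0 := by
    unfold eH; split_ifs with hc <;> first | rfl | (exfalso; omega) | (exfalso; simp only [not_and, not_le] at hc; omega)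
  have hsC1 : sC w (Rp w) = 0 := sC_eq_zero_iff.mpr le_rfl
  have htR : tC w (Rp w) = 0 := by omega
  have hLR : Lp w ≤ Rp w := tC_eq_zero_iff.mp htR
  have heK2 : eK w (Hp w) = 0 := by
    unfold eK; split_ifs with hc <;> first | rfl | (exfalso; omega) | (exfalso; simp only [not_and, not_le] at hc; omega)
  have heH2 : eH w (Hp w) = 1 := by
    unfold eH; split_ifs with hc <;> first | rfl | (exfalso; simp only [not_and, not_le] at hc; omega)
  have hsC2 : sC w (Hp w) = 0 := sC_eq_zero_iff.mpr (by omega)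
  have htH : tC w (Hp w) = 1 := by omega
  have : ¬ (Lp w ≤ Hp w) := by
    intro hc
    have := tC_eq_zero_iff.mpr hc
    omega
  omega

lemma Lp_add_Hp_eq {w : Word} (hw : IsTrapezoidal w) : Lp w + Hp w = w.length := by
  have hle := Lp_add_Hp_le w
  have hKlen := Kp_le_length w
  have hRlen := Rp_le_length w
  have hlen : w.length = Kp w + Rp w := hw
  have hclaim : ∀ n, n + Hp w < w.length → 1 ≤ tC w n := by
    intro n hn
    have hst := st_relation w n
    by_cases hnK : n < Kp w <;> by_cases hnR : n < Rp w
    · have heK : eK w n = 0 := by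
        unfold eK; split_ifs with hc <;> first | rfl | (exfalso; omega) | (exfalso; simp only [not_and, not_le] at hc; omega)
      have hsC : sC w n = 1 := sC_eq_one_of_trapezoidal hw hnR
      omega
    · -- n < K, R ≤ n
      have hHR : Hp w ≤ Rp w := by
        by_contra hcon
        push_neg at hcon
        exact M_B hw hcon (by omega)
      have heK : eK w n = 0 := by
        unfold eK; split_ifs with hc <;> first | rfl | (exfalso; omega) | (exfalso; simp only [not_and, not_le] at hc; omega)
      have heH : eH w n = 1 := by
        unfold eH; split_ifs with hc <;> first | rfl | (exfalso; simp only [not_and, not_le] at hc; omega)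
      have hsC : sC w n = 0 := sC_eq_zero_iff.mpr (by omega)
      omega
    · -- K ≤ n, n < R
      have hHK : Hp w ≤ Kp w := by
        by_contra hcon
        push_neg at hcon
        exact M_A hw hcon (by omega)
      have heK : eK w n = 1 := by
        unfold eK; split_ifs with hc <;> first | rfl | (exfalso; simp only [not_and, not_le] at hc; omega)
      have heH : eH w n = 1 := by
        unfold eH; split_ifs with hc <;> first | rfl | (exfalso; simp only [not_and, not_le] at hc; omega)
      have hsC : sC w n = 1 := sC_eq_one_of_trapezoidal hw hnR
      omega
    · -- K ≤ n, R ≤ n : impossible since then Hp w < min (Kp w) (Rp w)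
      exact absurd (not_Hp_lt_min hw (by omega) (by omega)) (by simp)
  rcases Nat.lt_or_ge (Lp w + Hp w) w.length with hlt | hge
  · have h1 := hclaim (Lp w) (by omega)
    have h2 : tC w (Lp w) = 0 := tC_eq_zero_iff.mpr le_rfl
    omega
  · omega

open scoped Classical in
noncomputable def openCount (w : Word) : ℕ :=
  ((Finset.Icc 1 w.length).filter (fun n => IsOpenWord (w.take n))).card

lemma closedCount_add_openCount (w : Word) :
    closedCount w + openCount w = w.length := by
  classical
  have hcong : (Finset.Icc 1 w.length).filter (fun n => IsOpenWord (w.take n))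
      = (Finset.Icc 1 w.length).filter (fun n => ¬ IsClosedWord (w.take n)) := by
    apply Finset.filter_congr
    intro n hn
    rw [Finset.mem_Icc] at hn
    have hne : w.take n ≠ [] := by
      intro hnil
      have : (w.take n).length = n := by simp; omega
      rw [hnil] at this
      simp at this
      omega
    constructor
    · exact fun h => h.2
    · exact fun h => ⟨hne, h⟩
  have := Finset.card_filter_add_card_filter_not
    (s := Finset.Icc 1 w.length) (p := fun n => IsClosedWord (w.take n))
  unfold closedCount openCount
  rw [hcong]
  rw [Nat.card_Icc] at this
  omega
open scoped Classical in
/-- `H w` counts the closed nonempty prefixes of `w`; if `w` is trapezoidal,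
`L w` counts the open nonempty prefixes. -/
theorem H_L_count_closed_open_prefixes (w : Word) :
    Hp w = Set.ncard {n : ℕ | 1 ≤ n ∧ n ≤ w.length ∧ IsClosedWord (w.take n)} ∧
    (IsTrapezoidal w →
      Lp w = Set.ncard {n : ℕ | 1 ≤ n ∧ n ≤ w.length ∧ IsOpenWord (w.take n)}) := by
  have hclosed : {n : ℕ | 1 ≤ n ∧ n ≤ w.length ∧ IsClosedWord (w.take n)}
      = ↑((Finset.Icc 1 w.length).filter (fun n => IsClosedWord (w.take n))) := by
    ext n; simp [Finset.mem_Icc, and_assoc]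
  have hopen : {n : ℕ | 1 ≤ n ∧ n ≤ w.length ∧ IsOpenWord (w.take n)}
      = ↑((Finset.Icc 1 w.length).filter (fun n => IsOpenWord (w.take n))) := by
    ext n; simp [Finset.mem_Icc, and_assoc]
  constructor
  · rw [hclosed, Set.ncard_coe_finset]
    exact Hp_eq_closedCount w
  · intro htrap
    rw [hopen, Set.ncard_coe_finset]
    have h1 := Lp_add_Hp_eq htrap
    have h2 := closedCount_add_openCount w
    have h3 := Hp_eq_closedCount w
    unfold openCount at h2
    omega
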